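/- arXiv:2205.01861 — 8 statements merged into one kernel-verified Lean document; each statement's English description precedes it below -/
import Mathlib

section
/- Let ρ₁ < α and ρ₂ < α, let W_Γ be a real Hilbert space, and let E₁, E₂ : W_Γ → V be bounded linear operators such that a_{ρ₁}(E₁u, w) = 0 and a_{ρ₂}(E₂u, w) = 0 for all u ∈ W_Γ and w ∈ V_I, and E₁u − E₂u ∈ V_I for all u ∈ W_Γ. Then for every u ∈ W_Γ, writing δu := E₁u − E₂u, one has a_{ρ₁}(δu, δu) = (ρ₁ − ρ₂)·(δu, E₂u). -/
open scoped RealInnerProductSpace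

/-- Let ρ₁ < α and ρ₂ < α, let W_Γ be a real Hilbert space, and let E₁, E₂ : W_Γ → V be
bounded linear operators such that a_{ρ₁}(E₁u, w) = 0 and a_{ρ₂}(E₂u, w) = 0 for all
u ∈ W_Γ and w ∈ V_I, and E₁u − E₂u ∈ V_I for all u ∈ W_Γ. Then for every u ∈ W_Γ,
writing δu := E₁u − E₂u, one has a_{ρ₁}(δu, δu) = (ρ₁ − ρ₂)·(δu, E₂u). -/
theorem stmt1
    {V : Type*} [NormedAddCommGroup V] [InnerProductSpace ℝ V] [CompleteSpace V]
    {WΓ : Type*} [NormedAddCommGroup WΓ] [InnerProductSpace ℝ WΓ] [CompleteSpace WΓ]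
    (a : V →L[ℝ] V →L[ℝ] ℝ)
    (hsymm : ∀ v w : V, a v w = a w v)
    (VI : Submodule ℝ V) (hVI : IsClosed (VI : Set V))
    (α : ℝ) (hα : 0 < α)
    (hcoer : ∀ w ∈ VI, a w w ≥ α * ‖w‖ ^ 2)
    (ρ₁ ρ₂ : ℝ) (hρ₁ : ρ₁ < α) (hρ₂ : ρ₂ < α)
    (E₁ E₂ : WΓ →L[ℝ] V)
    (hE₁ : ∀ u : WΓ, ∀ w ∈ VI, a (E₁ u) w - ρ₁ * ⟪E₁ u, w⟫ = 0)
    (hE₂ : ∀ u : WΓ, ∀ w ∈ VI, a (E₂ u) w - ρ₂ * ⟪E₂ u, w⟫ = 0)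
    (hdiff : ∀ u : WΓ, E₁ u - E₂ u ∈ VI)
    (u : WΓ) :
    a (E₁ u - E₂ u) (E₁ u - E₂ u) - ρ₁ * ⟪E₁ u - E₂ u, E₁ u - E₂ u⟫
      = (ρ₁ - ρ₂) * ⟪E₁ u - E₂ u, E₂ u⟫ := by
  have hδ := hdiff u
  have h1 := hE₁ u _ hδ
  have h2 := hE₂ u _ hδ
  have hmap : a (E₁ u - E₂ u) (E₁ u - E₂ u)
      = a (E₁ u) (E₁ u - E₂ u) - a (E₂ u) (E₁ u - E₂ u) := by
    simp [map_sub]; ring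
  have hin : (⟪E₁ u - E₂ u, E₁ u - E₂ u⟫ : ℝ)
      = ⟪E₁ u, E₁ u - E₂ u⟫ - ⟪E₂ u, E₁ u - E₂ u⟫ := inner_sub_left _ _ _
  have hc : (⟪E₁ u - E₂ u, E₂ u⟫ : ℝ) = ⟪E₂ u, E₁ u - E₂ u⟫ := real_inner_comm _ _
  rw [hmap, hin, hc]
  linarith
end

section
/- Let ρ₁ < α and ρ₂ < α, let W_Γ be a real Hilbert space with norm ‖·‖_Γ, and let E₁, E₂ : W_Γ → V be bounded linear operators such that a_{ρ₁}(E₁u, w) = 0 and a_{ρ₂}(E₂u, w) = 0 for all u ∈ W_Γ and w ∈ V_I, E₁u − E₂u ∈ V_I for all u ∈ W_Γ, and the operator norm of E₂ is at most c_E. Then for every u ∈ W_Γ: ‖E₁u − E₂u‖ ≤ (|ρ₁ − ρ₂|/(α − ρ₁))·‖E₂u‖ ≤ (c_E·|ρ₁ − ρ₂|/(α − ρ₁))·‖u‖_Γ. -/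
open scoped RealInnerProductSpace

/-- Let ρ₁ < α and ρ₂ < α, let W_Γ be a real Hilbert space with norm ‖·‖_Γ, and let
E₁, E₂ : W_Γ → V be bounded linear operators such that a_{ρ₁}(E₁u, w) = 0 and
a_{ρ₂}(E₂u, w) = 0 for all u ∈ W_Γ and w ∈ V_I, E₁u − E₂u ∈ V_I for all u ∈ W_Γ, and
the operator norm of E₂ is at most c_E. Then for every u ∈ W_Γ:
‖E₁u − E₂u‖ ≤ (|ρ₁ − ρ₂|/(α − ρ₁))·‖E₂u‖ ≤ (c_E·|ρ₁ − ρ₂|/(α − ρ₁))·‖u‖_Γ. -/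
theorem stmt2
    {V : Type*} [NormedAddCommGroup V] [InnerProductSpace ℝ V] [CompleteSpace V]
    {WΓ : Type*} [NormedAddCommGroup WΓ] [InnerProductSpace ℝ WΓ] [CompleteSpace WΓ]
    (a : V →L[ℝ] V →L[ℝ] ℝ)
    (hsymm : ∀ v w : V, a v w = a w v)
    (VI : Submodule ℝ V) (hVI : IsClosed (VI : Set V))
    (α : ℝ) (hα : 0 < α)
    (hcoer : ∀ w ∈ VI, a w w ≥ α * ‖w‖ ^ 2)
    (ρ₁ ρ₂ : ℝ) (hρ₁ : ρ₁ < α) (hρ₂ : ρ₂ < α)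
    (E₁ E₂ : WΓ →L[ℝ] V)
    (hE₁ : ∀ u : WΓ, ∀ w ∈ VI, a (E₁ u) w - ρ₁ * ⟪E₁ u, w⟫ = 0)
    (hE₂ : ∀ u : WΓ, ∀ w ∈ VI, a (E₂ u) w - ρ₂ * ⟪E₂ u, w⟫ = 0)
    (hdiff : ∀ u : WΓ, E₁ u - E₂ u ∈ VI)
    (cE : ℝ) (hcE : ‖E₂‖ ≤ cE)
    (u : WΓ) :
    ‖E₁ u - E₂ u‖ ≤ |ρ₁ - ρ₂| / (α - ρ₁) * ‖E₂ u‖ ∧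
      |ρ₁ - ρ₂| / (α - ρ₁) * ‖E₂ u‖ ≤ cE * |ρ₁ - ρ₂| / (α - ρ₁) * ‖u‖ := by

  set w := E₁ u - E₂ u with hw
  have hwVI : w ∈ VI := hdiff u
  have h1 := hE₁ u w hwVI
  have h2 := hE₂ u w hwVI
  have haw : a w w = ρ₁ * ⟪E₁ u, w⟫ - ρ₂ * ⟪E₂ u, w⟫ := by
    have : a w w = a (E₁ u) w - a (E₂ u) w := by
      simp [hw, map_sub]; ring
    rw [this]; linarith
  have hE1w : ⟪E₁ u, w⟫ = ⟪w, w⟫ + ⟪E₂ u, w⟫ := by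
    have : (E₁ u : V) = w + E₂ u := by simp [hw]
    rw [this, inner_add_left]
  have hcoerw := hcoer w hwVI
  have hww : ⟪w, w⟫ = ‖w‖ ^ 2 := real_inner_self_eq_norm_sq w
  have key : (α - ρ₁) * ‖w‖ ^ 2 ≤ (ρ₁ - ρ₂) * ⟪E₂ u, w⟫ := by
    have : a w w = ρ₁ * ‖w‖ ^ 2 + (ρ₁ - ρ₂) * ⟪E₂ u, w⟫ := by
      rw [haw, hE1w, hww]; ring
    nlinarith
  have hcs : (ρ₁ - ρ₂) * ⟪E₂ u, w⟫ ≤ |ρ₁ - ρ₂| * (‖E₂ u‖ * ‖w‖) := by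
    calc (ρ₁ - ρ₂) * ⟪E₂ u, w⟫ ≤ |(ρ₁ - ρ₂) * ⟪E₂ u, w⟫| := le_abs_self _
    _ = |ρ₁ - ρ₂| * |⟪E₂ u, w⟫| := abs_mul _ _
    _ ≤ |ρ₁ - ρ₂| * (‖E₂ u‖ * ‖w‖) := by
        exact mul_le_mul_of_nonneg_left (abs_real_inner_le_norm _ _) (abs_nonneg _)
  have hαρ : 0 < α - ρ₁ := by linarith
  have first : ‖w‖ ≤ |ρ₁ - ρ₂| / (α - ρ₁) * ‖E₂ u‖ := by
    rcases eq_or_lt_of_le (norm_nonneg w) with h0 | h0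
    · rw [← h0]
      positivity
    · rw [div_mul_eq_mul_div, le_div_iff₀ hαρ]
      have : (α - ρ₁) * ‖w‖ ^ 2 ≤ |ρ₁ - ρ₂| * (‖E₂ u‖ * ‖w‖) := le_trans key hcs
      nlinarith
  refine ⟨first, ?_⟩
  have h2 : ‖E₂ u‖ ≤ cE * ‖u‖ := le_trans (E₂.le_opNorm u) (by
    exact mul_le_mul_of_nonneg_right hcE (norm_nonneg u))
  calc |ρ₁ - ρ₂| / (α - ρ₁) * ‖E₂ u‖ ≤ |ρ₁ - ρ₂| / (α - ρ₁) * (cE * ‖u‖) := by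
        exact mul_le_mul_of_nonneg_left h2 (by positivity)
  _ = cE * |ρ₁ - ρ₂| / (α - ρ₁) * ‖u‖ := by ring
end

section
/- Suppose the map σ ↦ E_σ is differentiable in operator norm at a point ρ < α. Then for all u₁, u₂ ∈ W_Γ, the real-valued function σ ↦ s_σ(u₁,u₂) = a_σ(E_σu₁, E_σu₂) is differentiable at ρ with derivative −(E_ρu₁, E_ρu₂). -/
open scoped RealInnerProductSpace

/-- Suppose the map σ ↦ E_σ is differentiable in operator norm at a point ρ < α.
Then for all u₁, u₂ ∈ W_Γ, the function σ ↦ s_σ(u₁,u₂) = a_σ(E_σu₁, E_σu₂) is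
differentiable at ρ with derivative −(E_ρu₁, E_ρu₂). -/
theorem stmt3
    {V : Type*} [NormedAddCommGroup V] [InnerProductSpace ℝ V] [CompleteSpace V]
    {WΓ : Type*} [NormedAddCommGroup WΓ] [InnerProductSpace ℝ WΓ] [CompleteSpace WΓ]
    (a : V →L[ℝ] V →L[ℝ] ℝ)
    (hsymm : ∀ v w : V, a v w = a w v)
    (VI : Submodule ℝ V) (hVI : IsClosed (VI : Set V))
    (α : ℝ) (hα : 0 < α)
    (hcoer : ∀ w ∈ VI, a w w ≥ α * ‖w‖ ^ 2)
    (E : ℝ → (WΓ →L[ℝ] V))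
    (hext : ∀ σ, σ < α → ∀ u : WΓ, ∀ w ∈ VI, a (E σ u) w - σ * ⟪E σ u, w⟫ = 0)
    (hdiffVI : ∀ σ₁ σ₂, σ₁ < α → σ₂ < α → ∀ u : WΓ, E σ₁ u - E σ₂ u ∈ VI)
    (ρ : ℝ) (hρ : ρ < α)
    (hE : DifferentiableAt ℝ E ρ)
    (u₁ u₂ : WΓ) :
    HasDerivAt (fun σ => a (E σ u₁) (E σ u₂) - σ * ⟪E σ u₁, E σ u₂⟫)
      (-⟪E ρ u₁, E ρ u₂⟫) ρ := by

  set D := deriv E ρ with hD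
  have hED : HasDerivAt E D ρ := hE.hasDerivAt
  have hmem : ∀ u : WΓ, D u ∈ VI := by
    intro u
    have hslope : Filter.Tendsto (slope E ρ) (nhdsWithin ρ {ρ}ᶜ) (nhds D) :=
      hasDerivAt_iff_tendsto_slope.mp hED
    have htend : Filter.Tendsto (fun σ => (slope E ρ σ) u) (nhdsWithin ρ {ρ}ᶜ)
        (nhds (D u)) :=
      ((ContinuousLinearMap.apply ℝ V u).continuous.tendsto D).comp hslope
    have hev : ∀ᶠ σ in nhdsWithin ρ {ρ}ᶜ, (slope E ρ σ) u ∈ VI := by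
      have h1 : ∀ᶠ σ in nhdsWithin ρ {ρ}ᶜ, σ < α :=
        Filter.Eventually.filter_mono nhdsWithin_le_nhds (isOpen_Iio.eventually_mem hρ)
      filter_upwards [h1] with σ hσ
      have : (slope E ρ σ) u = (σ - ρ)⁻¹ • (E σ u - E ρ u) := by
        simp [slope_def_module]
      rw [this]
      exact VI.smul_mem _ (hdiffVI σ ρ hσ hρ u)
    exact hVI.mem_of_tendsto htend hev
  have h1 : HasDerivAt (fun σ => E σ u₁) (D u₁) ρ := by
    have := hED.clm_apply (hasDerivAt_const ρ u₁)
    simpa using this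
  have h2 : HasDerivAt (fun σ => E σ u₂) (D u₂) ρ := by
    have := hED.clm_apply (hasDerivAt_const ρ u₂)
    simpa using this
  have hc : HasDerivAt (fun σ => a (E σ u₁)) (a (D u₁)) ρ :=
    a.hasFDerivAt.comp_hasDerivAt ρ h1
  have ha : HasDerivAt (fun σ => a (E σ u₁) (E σ u₂))
      (a (D u₁) (E ρ u₂) + a (E ρ u₁) (D u₂)) ρ := hc.clm_apply h2
  have hinner : HasDerivAt (fun σ => ⟪E σ u₁, E σ u₂⟫)
      (⟪E ρ u₁, D u₂⟫ + ⟪D u₁, E ρ u₂⟫) ρ := h1.inner ℝ h2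
  have hmul : HasDerivAt (fun σ => σ * ⟪E σ u₁, E σ u₂⟫)
      (1 * ⟪E ρ u₁, E ρ u₂⟫ + ρ * (⟪E ρ u₁, D u₂⟫ + ⟪D u₁, E ρ u₂⟫)) ρ :=
    (hasDerivAt_id ρ).mul hinner
  have htot := ha.sub hmul
  have key1 : a (E ρ u₁) (D u₂) - ρ * ⟪E ρ u₁, D u₂⟫ = 0 :=
    hext ρ hρ u₁ (D u₂) (hmem u₂)
  have key2 : a (E ρ u₂) (D u₁) - ρ * ⟪E ρ u₂, D u₁⟫ = 0 :=
    hext ρ hρ u₂ (D u₁) (hmem u₁)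
  have hs : a (D u₁) (E ρ u₂) = a (E ρ u₂) (D u₁) := hsymm _ _
  have hic : ⟪D u₁, E ρ u₂⟫ = ⟪E ρ u₂, D u₁⟫ := real_inner_comm _ _
  convert htot using 1
  case e'_4 => rfl
  case e'_5 => rfl
  case e'_8 => rfl
  rw [hs, hic]
  linarith
end

section
/- Let ρ < α and suppose: the map σ ↦ E_σ is differentiable in operator norm at ρ; θ : ℝ → ℝ and u : ℝ → W_Γ are differentiable at ρ; u(σ) ≠ 0 and the eigenvalue equation s_σ(u(σ), w) = θ(σ)·(u(σ), w)_Γ holds for all w ∈ W_Γ and all σ in a neighborhood of ρ; and E_ρ(u(ρ)) ≠ 0. Then θ'(ρ) = −‖E_ρ(u(ρ))‖² / ‖u(ρ)‖_Γ² < 0. -/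
open scoped RealInnerProductSpace

/-- Let ρ < α and suppose: the map σ ↦ E_σ is differentiable in operator norm at ρ;
θ : ℝ → ℝ and u : ℝ → W_Γ are differentiable at ρ; u(σ) ≠ 0 and the eigenvalue equation
s_σ(u(σ), w) = θ(σ)·(u(σ), w)_Γ holds for all w ∈ W_Γ and all σ in a neighborhood of ρ;
and E_ρ(u(ρ)) ≠ 0. Then θ'(ρ) = −‖E_ρ(u(ρ))‖² / ‖u(ρ)‖_Γ² < 0. -/
theorem stmt4
    {V : Type*} [NormedAddCommGroup V] [InnerProductSpace ℝ V] [CompleteSpace V]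
    {WΓ : Type*} [NormedAddCommGroup WΓ] [InnerProductSpace ℝ WΓ] [CompleteSpace WΓ]
    (a : V →L[ℝ] V →L[ℝ] ℝ)
    (hsymm : ∀ v w : V, a v w = a w v)
    (VI : Submodule ℝ V) (hVI : IsClosed (VI : Set V))
    (α : ℝ) (hα : 0 < α)
    (hcoer : ∀ w ∈ VI, a w w ≥ α * ‖w‖ ^ 2)
    (E : ℝ → (WΓ →L[ℝ] V))
    (hext : ∀ σ, σ < α → ∀ u : WΓ, ∀ w ∈ VI, a (E σ u) w - σ * ⟪E σ u, w⟫ = 0)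
    (hdiffVI : ∀ σ₁ σ₂, σ₁ < α → σ₂ < α → ∀ u : WΓ, E σ₁ u - E σ₂ u ∈ VI)
    (ρ : ℝ) (hρ : ρ < α)
    (hE : DifferentiableAt ℝ E ρ)
    (θ : ℝ → ℝ) (u : ℝ → WΓ)
    (hθ : DifferentiableAt ℝ θ ρ) (hu : DifferentiableAt ℝ u ρ)
    (heig : ∀ᶠ σ in nhds ρ, u σ ≠ 0 ∧ ∀ w : WΓ,
      a (E σ (u σ)) (E σ w) - σ * ⟪E σ (u σ), E σ w⟫ = θ σ * ⟪u σ, w⟫)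
    (hne : E ρ (u ρ) ≠ 0) :
    deriv θ ρ = -‖E ρ (u ρ)‖ ^ 2 / ‖u ρ‖ ^ 2 ∧ deriv θ ρ < 0 := by
  have huρ : u ρ ≠ 0 := (heig.self_of_nhds).1
  -- derivative of σ ↦ E σ (u σ)
  have hvd : HasDerivAt (fun σ => E σ (u σ)) (deriv E ρ (u ρ) + E ρ (deriv u ρ)) ρ :=
    hE.hasDerivAt.clm_apply hu.hasDerivAt
  set v' : V := deriv E ρ (u ρ) + E ρ (deriv u ρ) with hv'def
  -- the derivative of E applied to u ρ lies in VI
  have hmem : deriv E ρ (u ρ) ∈ VI := by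
    have hd := hE.hasDerivAt
    rw [hasDerivAt_iff_tendsto_slope] at hd
    have ht : Filter.Tendsto (fun σ => slope E ρ σ (u ρ)) (nhdsWithin ρ {ρ}ᶜ)
        (nhds (deriv E ρ (u ρ))) :=
      ((ContinuousLinearMap.apply ℝ V (u ρ)).continuous.tendsto _).comp hd
    refine hVI.mem_of_tendsto ht ?_
    have hlt : ∀ᶠ σ in nhdsWithin ρ {ρ}ᶜ, σ < α :=
      eventually_nhdsWithin_of_eventually_nhds (eventually_lt_nhds hρ)
    filter_upwards [hlt] with σ hσ
    have : slope E ρ σ (u ρ) = (σ - ρ)⁻¹ • (E σ (u ρ) - E ρ (u ρ)) := by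
      rw [slope_def_module]
      simp [ContinuousLinearMap.smul_apply, ContinuousLinearMap.sub_apply]
    rw [this]
    exact VI.smul_mem _ (hdiffVI σ ρ hσ hρ (u ρ))
  -- key identity for a_ρ(E ρ u ρ, v')
  have key : a (E ρ (u ρ)) v' - ρ * ⟪E ρ (u ρ), v'⟫ = θ ρ * ⟪u ρ, deriv u ρ⟫ := by
    have h1 := hext ρ hρ (u ρ) (deriv E ρ (u ρ)) hmem
    have h2 := (heig.self_of_nhds).2 (deriv u ρ)
    rw [hv'def, map_add, inner_add_right]
    linarith [h1, h2]
  -- derivative of the quadratic form side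
  have hA : HasDerivAt (fun σ => a (E σ (u σ)) (E σ (u σ)))
      ((a v') (E ρ (u ρ)) + (a (E ρ (u ρ))) v') ρ := by
    have h1 : HasDerivAt (fun σ => a (E σ (u σ))) (a v') ρ := by
      simpa using (hasDerivAt_const ρ a).clm_apply hvd
    simpa using h1.clm_apply hvd
  have hI : HasDerivAt (fun σ => ⟪E σ (u σ), E σ (u σ)⟫)
      (⟪E ρ (u ρ), v'⟫ + ⟪v', E ρ (u ρ)⟫) ρ := hvd.inner ℝ hvd
  have hF : HasDerivAt (fun σ => a (E σ (u σ)) (E σ (u σ)) - σ * ⟪E σ (u σ), E σ (u σ)⟫)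
      (((a v') (E ρ (u ρ)) + (a (E ρ (u ρ))) v') -
        (1 * ⟪E ρ (u ρ), E ρ (u ρ)⟫ + ρ * (⟪E ρ (u ρ), v'⟫ + ⟪v', E ρ (u ρ)⟫))) ρ :=
    hA.sub ((hasDerivAt_id ρ).mul hI)
  have hG : HasDerivAt (fun σ => θ σ * ⟪u σ, u σ⟫)
      (deriv θ ρ * ⟪u ρ, u ρ⟫ + θ ρ * (⟪u ρ, deriv u ρ⟫ + ⟪deriv u ρ, u ρ⟫)) ρ :=
    hθ.hasDerivAt.mul (hu.hasDerivAt.inner ℝ hu.hasDerivAt)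
  have heq : (fun σ => a (E σ (u σ)) (E σ (u σ)) - σ * ⟪E σ (u σ), E σ (u σ)⟫)
      =ᶠ[nhds ρ] (fun σ => θ σ * ⟪u σ, u σ⟫) := by
    filter_upwards [heig] with σ hσ
    exact hσ.2 (u σ)
  have hde : (((a v') (E ρ (u ρ)) + (a (E ρ (u ρ))) v') -
        (1 * ⟪E ρ (u ρ), E ρ (u ρ)⟫ + ρ * (⟪E ρ (u ρ), v'⟫ + ⟪v', E ρ (u ρ)⟫)))
      = deriv θ ρ * ⟪u ρ, u ρ⟫ + θ ρ * (⟪u ρ, deriv u ρ⟫ + ⟪deriv u ρ, u ρ⟫) := by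
    have h := heq.deriv_eq
    rw [hF.deriv, hG.deriv] at h
    exact h
  have hs : (a v') (E ρ (u ρ)) = (a (E ρ (u ρ))) v' := hsymm _ _
  have hic : ⟪v', E ρ (u ρ)⟫ = ⟪E ρ (u ρ), v'⟫ := real_inner_comm _ _
  have hicu : ⟪deriv u ρ, u ρ⟫ = ⟪u ρ, deriv u ρ⟫ := real_inner_comm _ _
  have hmain : deriv θ ρ * ⟪u ρ, u ρ⟫ = -⟪E ρ (u ρ), E ρ (u ρ)⟫ := by
    rw [hs, hic, hicu] at hde
    linarith [key, hde]
  have hnu : ⟪u ρ, u ρ⟫ = ‖u ρ‖ ^ 2 := real_inner_self_eq_norm_sq _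
  have hnv : ⟪E ρ (u ρ), E ρ (u ρ)⟫ = ‖E ρ (u ρ)‖ ^ 2 := real_inner_self_eq_norm_sq _
  have hupos : (0 : ℝ) < ‖u ρ‖ ^ 2 := pow_pos (norm_pos_iff.mpr huρ) 2
  have hvpos : (0 : ℝ) < ‖E ρ (u ρ)‖ ^ 2 := pow_pos (norm_pos_iff.mpr hne) 2
  rw [hnu, hnv] at hmain
  have heqd : deriv θ ρ = -‖E ρ (u ρ)‖ ^ 2 / ‖u ρ‖ ^ 2 := by
    rw [eq_div_iff (ne_of_gt hupos)]
    linarith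
  exact ⟨heqd, heqd ▸ div_neg_of_neg_of_pos (by linarith) hupos⟩
end

section
/- Let W_Γ be a real Hilbert space with inner product (·,·)_Γ and norm ‖·‖_Γ, and let s : ℝ → (bounded symmetric bilinear forms on W_Γ) be such that on a neighborhood of a point ρ the maps σ ↦ s_σ, a first-derivative family σ ↦ s'_σ (with s'' the derivative of s' at ρ), θ : ℝ → ℝ and u : ℝ → W_Γ are defined, with s differentiable with derivative s' near ρ, s' differentiable at ρ with derivative s'', and θ, u twice differentiable at ρ. Suppose the eigenvalue equation s_σ(u(σ), w) = θ(σ)·(u(σ), w)_Γ holds for all w ∈ W_Γ and all σ in a neighborhood of ρ. Then θ''(ρ)·‖u(ρ)‖_Γ² = s''(u(ρ), u(ρ)) + 2·θ(ρ)·‖u'(ρ)‖_Γ² − 2·s_ρ(u'(ρ), u'(ρ)), where u' and u'' denote the first and second derivatives of u. -/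
open scoped RealInnerProductSpace

/-- Second-order perturbation identity for a differentiable family of bounded symmetric
bilinear forms s_σ on a real Hilbert space W_Γ with differentiable eigenpair family
(θ(σ), u(σ)) satisfying s_σ(u(σ), w) = θ(σ)(u(σ), w)_Γ for all w:
θ''(ρ)·‖u(ρ)‖² = s''(u(ρ), u(ρ)) + 2·θ(ρ)·‖u'(ρ)‖² − 2·s_ρ(u'(ρ), u'(ρ)). -/
theorem stmt7
    {WΓ : Type*} [NormedAddCommGroup WΓ] [InnerProductSpace ℝ WΓ] [CompleteSpace WΓ]
    (s : ℝ → (WΓ →L[ℝ] WΓ →L[ℝ] ℝ))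
    (hsymm : ∀ σ (w₁ w₂ : WΓ), s σ w₁ w₂ = s σ w₂ w₁)
    (s' : ℝ → (WΓ →L[ℝ] WΓ →L[ℝ] ℝ)) (s'' : WΓ →L[ℝ] WΓ →L[ℝ] ℝ)
    (θ θ' : ℝ → ℝ) (θ'' : ℝ) (u u' : ℝ → WΓ) (u'' : WΓ)
    (ρ : ℝ)
    (hs : ∀ᶠ σ in nhds ρ, HasDerivAt s (s' σ) σ)
    (hs' : HasDerivAt s' s'' ρ)
    (hθ : ∀ᶠ σ in nhds ρ, HasDerivAt θ (θ' σ) σ)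
    (hθ' : HasDerivAt θ' θ'' ρ)
    (hu : ∀ᶠ σ in nhds ρ, HasDerivAt u (u' σ) σ)
    (hu' : HasDerivAt u' u'' ρ)
    (heig : ∀ᶠ σ in nhds ρ, ∀ w : WΓ, s σ (u σ) w = θ σ * ⟪u σ, w⟫) :
    θ'' * ‖u ρ‖ ^ 2 =
      s'' (u ρ) (u ρ) + 2 * θ ρ * ‖u' ρ‖ ^ 2 - 2 * s ρ (u' ρ) (u' ρ) := by
  have hsρ := hs.self_of_nhds
  have hθρ := hθ.self_of_nhds
  have huρ := hu.self_of_nhds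
  have heigρ := heig.self_of_nhds
  -- first-order identity, eventually near ρ
  have key1 : ∀ w : WΓ, ∀ᶠ σ in nhds ρ,
      s' σ (u σ) w + s σ (u' σ) w = θ' σ * ⟪u σ, w⟫ + θ σ * ⟪u' σ, w⟫ := by
    intro w
    filter_upwards [hs, hθ, hu, heig.eventually_nhds] with σ hsσ hθσ huσ heigσ
    have h1 : HasDerivAt (fun τ => s τ (u τ) w) (s' σ (u σ) w + s σ (u' σ) w) σ := by
      have := (hsσ.clm_apply huσ).clm_apply (hasDerivAt_const σ w)
      simpa using this
    have h2 : HasDerivAt (fun τ => θ τ * ⟪u τ, w⟫) (θ' σ * ⟪u σ, w⟫ + θ σ * ⟪u' σ, w⟫) σ := by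
      have := hθσ.mul (huσ.inner ℝ (hasDerivAt_const σ w))
      simp at this; exact this
    have h2' : HasDerivAt (fun τ => s τ (u τ) w) (θ' σ * ⟪u σ, w⟫ + θ σ * ⟪u' σ, w⟫) σ :=
      h2.congr_of_eventuallyEq (heigσ.mono fun τ h => h w)
    exact h1.unique h2'
  -- second-order identity at ρ
  have key2 : ∀ w : WΓ,
      s'' (u ρ) w + s' ρ (u' ρ) w + (s' ρ (u' ρ) w + s ρ u'' w)
        = θ'' * ⟪u ρ, w⟫ + θ' ρ * ⟪u' ρ, w⟫ + (θ' ρ * ⟪u' ρ, w⟫ + θ ρ * ⟪u'', w⟫) := by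
    intro w
    have hL : HasDerivAt (fun σ => s' σ (u σ) w + s σ (u' σ) w)
        (s'' (u ρ) w + s' ρ (u' ρ) w + (s' ρ (u' ρ) w + s ρ u'' w)) ρ := by
      have t1 := (hs'.clm_apply huρ).clm_apply (hasDerivAt_const ρ w)
      have t2 := (hsρ.clm_apply hu').clm_apply (hasDerivAt_const ρ w)
      have := t1.add t2
      simp at this; exact this
    have hR : HasDerivAt (fun σ => θ' σ * ⟪u σ, w⟫ + θ σ * ⟪u' σ, w⟫)
        (θ'' * ⟪u ρ, w⟫ + θ' ρ * ⟪u' ρ, w⟫ + (θ' ρ * ⟪u' ρ, w⟫ + θ ρ * ⟪u'', w⟫)) ρ := by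
      have t1 := hθ'.mul (huρ.inner ℝ (hasDerivAt_const ρ w))
      have t2 := hθρ.mul (hu'.inner ℝ (hasDerivAt_const ρ w))
      have := t1.add t2
      simp at this; exact this
    have hL' := hR.congr_of_eventuallyEq ((key1 w).mono fun τ h => h)
    exact hL.unique hL'
  -- symmetry of s' ρ
  have hs'symm : ∀ w₁ w₂ : WΓ, s' ρ w₁ w₂ = s' ρ w₂ w₁ := by
    intro w₁ w₂
    have h1 : HasDerivAt (fun σ => s σ w₁ w₂) (s' ρ w₁ w₂) ρ := by
      have := (hsρ.clm_apply (hasDerivAt_const ρ w₁)).clm_apply (hasDerivAt_const ρ w₂)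
      simpa using this
    have h2 : HasDerivAt (fun σ => s σ w₂ w₁) (s' ρ w₂ w₁) ρ := by
      have := (hsρ.clm_apply (hasDerivAt_const ρ w₂)).clm_apply (hasDerivAt_const ρ w₁)
      simpa using this
    have h2' : HasDerivAt (fun σ => s σ w₁ w₂) (s' ρ w₂ w₁) ρ :=
      h2.congr_of_eventuallyEq (Filter.Eventually.of_forall fun τ => hsymm τ w₁ w₂)
    exact h1.unique h2'
  have e2 := key2 (u ρ)
  have e1 := (key1 (u' ρ)).self_of_nhds
  have e0 := heigρ u''
  have hsym1 : s' ρ (u' ρ) (u ρ) = s' ρ (u ρ) (u' ρ) := hs'symm _ _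
  have hsym2 : s ρ u'' (u ρ) = s ρ (u ρ) u'' := hsymm ρ _ _
  have hinner1 : ⟪u ρ, u' ρ⟫ = ⟪u' ρ, u ρ⟫ := real_inner_comm _ _
  have hinner2 : ⟪u ρ, u''⟫ = ⟪u'', u ρ⟫ := real_inner_comm _ _
  have hn1 : ⟪u ρ, u ρ⟫ = ‖u ρ‖ ^ 2 := real_inner_self_eq_norm_sq _
  have hn2 : ⟪u' ρ, u' ρ⟫ = ‖u' ρ‖ ^ 2 := real_inner_self_eq_norm_sq _
  rw [hsym1, hsym2, e0, hinner2, hn1, ← hinner1] at e2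
  rw [hn2] at e1
  linarith [e1, e2]
end

section
/- For every fixed u ∈ W_Γ, the function ρ ↦ s_ρ(u,u) = a(E_ρu, E_ρu) − ρ·(E_ρu, E_ρu) is concave on the interval (−∞, α). -/
open scoped RealInnerProductSpace

/-- For every fixed u ∈ W_Γ, the function ρ ↦ s_ρ(u,u) = a(E_ρu, E_ρu) − ρ·(E_ρu, E_ρu)
is concave on the interval (−∞, α). -/
theorem stmt9
    {V : Type*} [NormedAddCommGroup V] [InnerProductSpace ℝ V] [CompleteSpace V]
    {WΓ : Type*} [NormedAddCommGroup WΓ] [InnerProductSpace ℝ WΓ] [CompleteSpace WΓ]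
    (a : V →L[ℝ] V →L[ℝ] ℝ)
    (hsymm : ∀ v w : V, a v w = a w v)
    (VI : Submodule ℝ V) (hVI : IsClosed (VI : Set V))
    (α : ℝ) (hα : 0 < α)
    (hcoer : ∀ w ∈ VI, a w w ≥ α * ‖w‖ ^ 2)
    (E : ℝ → (WΓ →L[ℝ] V))
    (hext : ∀ σ, σ < α → ∀ u : WΓ, ∀ w ∈ VI, a (E σ u) w - σ * ⟪E σ u, w⟫ = 0)
    (hdiffVI : ∀ σ₁ σ₂, σ₁ < α → σ₂ < α → ∀ u : WΓ, E σ₁ u - E σ₂ u ∈ VI)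
    (u : WΓ) :
    ConcaveOn ℝ (Set.Iio α)
      (fun ρ => a (E ρ u) (E ρ u) - ρ * ⟪E ρ u, E ρ u⟫) := by
  -- Key: for σ, ρ < α, the value at ρ is ≤ the affine function from σ evaluated at ρ.
  have key : ∀ σ ρ : ℝ, σ < α → ρ < α →
      a (E ρ u) (E ρ u) - ρ * ⟪E ρ u, E ρ u⟫ ≤
      a (E σ u) (E σ u) - ρ * ⟪E σ u, E σ u⟫ := by
    intro σ ρ hσ hρ
    set p := E ρ u with hp
    set d := E σ u - E ρ u with hd
    have hmem : d ∈ VI := hdiffVI σ ρ hσ hρ u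
    have horth : a p d - ρ * ⟪p, d⟫ = 0 := hext ρ hρ u d hmem
    have hE : E σ u = p + d := by rw [hd, hp]; abel
    have hdd : α * ‖d‖ ^ 2 ≤ a d d := hcoer d hmem
    have hinner : ⟪d, d⟫ = ‖d‖ ^ 2 := real_inner_self_eq_norm_sq d
    have hnn : 0 ≤ a d d - ρ * ⟪d, d⟫ := by nlinarith [sq_nonneg ‖d‖]
    have expand : a (E σ u) (E σ u) = a p p + 2 * a p d + a d d := by
      rw [hE]; simp only [map_add, ContinuousLinearMap.add_apply]
      rw [hsymm d p]; ring
    have inner_expand : ⟪E σ u, E σ u⟫ = ⟪p, p⟫ + 2 * ⟪p, d⟫ + ⟪d, d⟫ := by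
      rw [hE]; exact real_inner_add_add_self p d
    rw [expand, inner_expand]
    nlinarith [horth, hnn]
  refine ⟨convex_Iio α, ?_⟩
  intro x hx y hy t s ht hs hts
  have hx' : x < α := hx
  have hy' : y < α := hy
  have hρ : t • x + s • y < α := (convex_Iio α) hx hy ht hs hts
  set ρ := t • x + s • y with hρdef
  have k1 := key ρ x hρ hx'
  have k2 := key ρ y hρ hy'
  simp only [smul_eq_mul] at *
  have hmul : ρ = t * x + s * y := hρdef
  have k1' := mul_le_mul_of_nonneg_left k1 ht
  have k2' := mul_le_mul_of_nonneg_left k2 hs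
  have hcomb : t * (a (E ρ u) (E ρ u) - x * ⟪E ρ u, E ρ u⟫) +
      s * (a (E ρ u) (E ρ u) - y * ⟪E ρ u, E ρ u⟫) =
      a (E ρ u) (E ρ u) - ρ * ⟪E ρ u, E ρ u⟫ := by
    rw [hmul]
    linear_combination (a (E ρ u) (E ρ u)) * hts
  linarith [k1', k2']
end

section
/- Suppose in addition: ‖E_σ‖ ≤ c_E for all σ < α; λ < ρ₀ < α; the map σ ↦ E_σ is twice continuously differentiable in operator norm on a neighborhood of [λ, ρ₀]; θ : ℝ → ℝ and u : ℝ → W_Γ are twice continuously differentiable on a neighborhood of [λ, ρ₀] with ‖u(σ)‖_Γ = 1, E_σ(u(σ)) ≠ 0, the eigenvalue equation s_σ(u(σ), w) = θ(σ)·(u(σ), w)_Γ for all w ∈ W_Γ, and the minimality property s_σ(w,w) ≥ θ(σ)·‖w‖_Γ² for all w ∈ W_Γ, all for σ in that neighborhood; θ(λ) = 0; and there is a spectral gap c_g > 0 such that for all σ ∈ [λ, ρ₀] and all w ∈ W_Γ with (w, u(σ))_Γ = 0 one has s_σ(w,w) − θ(σ)·‖w‖_Γ² ≥ c_g·‖w‖_Γ².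 Then for every ρ ∈ (λ, ρ₀], the Newton iterate ρ_N := ρ − θ(ρ)/θ'(ρ) satisfies ρ_N − λ ≤ (1/(α − ρ₀) + c_E²/c_g)·(ρ − λ)². -/
open scoped RealInnerProductSpace

set_option maxHeartbeats 1000000 in
/-- Main quadratic-convergence theorem for the Newton–Schur method: under uniform
boundedness of the extensions, twice continuous differentiability of the extension,
eigenvalue and eigenvector families on a neighborhood of [λ, ρ₀], normalization,
minimality, θ(λ) = 0, and a uniform spectral gap c_g, the Newton iterate from any
ρ ∈ (λ, ρ₀] satisfies ρ_N − λ ≤ (1/(α − ρ₀) + c_E²/c_g)·(ρ − λ)². -/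
theorem stmt11
    {V : Type*} [NormedAddCommGroup V] [InnerProductSpace ℝ V] [CompleteSpace V]
    {WΓ : Type*} [NormedAddCommGroup WΓ] [InnerProductSpace ℝ WΓ] [CompleteSpace WΓ]
    (a : V →L[ℝ] V →L[ℝ] ℝ)
    (hsymm : ∀ v w : V, a v w = a w v)
    (VI : Submodule ℝ V) (hVI : IsClosed (VI : Set V))
    (α : ℝ) (hα : 0 < α)
    (hcoer : ∀ w ∈ VI, a w w ≥ α * ‖w‖ ^ 2)
    (E : ℝ → (WΓ →L[ℝ] V))
    (hext : ∀ σ, σ < α → ∀ u : WΓ, ∀ w ∈ VI, a (E σ u) w - σ * ⟪E σ u, w⟫ = 0)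
    (hdiffVI : ∀ σ₁ σ₂, σ₁ < α → σ₂ < α → ∀ u : WΓ, E σ₁ u - E σ₂ u ∈ VI)
    (cE : ℝ) (hcE : ∀ σ, σ < α → ‖E σ‖ ≤ cE)
    (lam ρ₀ : ℝ) (h₁ : lam < ρ₀) (h₂ : ρ₀ < α)
    -- an open neighborhood of [λ, ρ₀] on which everything is smooth
    (U : Set ℝ) (hU : IsOpen U) (hUIcc : Set.Icc lam ρ₀ ⊆ U)
    (E' E'' : ℝ → (WΓ →L[ℝ] V))
    (hE' : ∀ σ ∈ U, HasDerivAt E (E' σ) σ)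
    (hE'' : ∀ σ ∈ U, HasDerivAt E' (E'' σ) σ)
    (hE''cont : ContinuousOn E'' U)
    (θ θ' θ'' : ℝ → ℝ) (u u' u'' : ℝ → WΓ)
    (hθ' : ∀ σ ∈ U, HasDerivAt θ (θ' σ) σ)
    (hθ'' : ∀ σ ∈ U, HasDerivAt θ' (θ'' σ) σ)
    (hθ''cont : ContinuousOn θ'' U)
    (hu' : ∀ σ ∈ U, HasDerivAt u (u' σ) σ)
    (hu'' : ∀ σ ∈ U, HasDerivAt u' (u'' σ) σ)
    (hu''cont : ContinuousOn u'' U)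
    (hnorm : ∀ σ ∈ U, ‖u σ‖ = 1)
    (hEu : ∀ σ ∈ U, E σ (u σ) ≠ 0)
    (heig : ∀ σ ∈ U, ∀ w : WΓ,
      a (E σ (u σ)) (E σ w) - σ * ⟪E σ (u σ), E σ w⟫ = θ σ * ⟪u σ, w⟫)
    (hmin : ∀ σ ∈ U, ∀ w : WΓ,
      a (E σ w) (E σ w) - σ * ⟪E σ w, E σ w⟫ ≥ θ σ * ‖w‖ ^ 2)
    (hθlam : θ lam = 0)
    (cg : ℝ) (hcg : 0 < cg)
    (hgap : ∀ σ ∈ Set.Icc lam ρ₀, ∀ w : WΓ, ⟪w, u σ⟫ = 0 →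
      a (E σ w) (E σ w) - σ * ⟪E σ w, E σ w⟫ - θ σ * ‖w‖ ^ 2 ≥ cg * ‖w‖ ^ 2)
    (ρ : ℝ) (hρ₁ : lam < ρ) (hρ₂ : ρ ≤ ρ₀) :
    (ρ - θ ρ / θ' ρ) - lam ≤ (1 / (α - ρ₀) + cE ^ 2 / cg) * (ρ - lam) ^ 2 := by
  set C : ℝ := 1 / (α - ρ₀) + cE ^ 2 / cg with hCdef
  have hαρ₀ : (0:ℝ) < α - ρ₀ := sub_pos.2 h₂
  have hC0 : 0 < C :=
    add_pos_of_pos_of_nonneg (one_div_pos.2 hαρ₀) (div_nonneg (sq_nonneg cE) hcg.le)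
  have hρIcc : ρ ∈ Set.Icc lam ρ₀ := ⟨hρ₁.le, hρ₂⟩
  have hρU : ρ ∈ U := hUIcc hρIcc
  have hcE0 : 0 ≤ cE := le_trans (norm_nonneg (E ρ)) (hcE ρ (lt_of_le_of_lt hρ₂ h₂))
  -- application derivatives
  have hEap : ∀ σ ∈ U, ∀ z : WΓ, HasDerivAt (fun t => E t z) (E' σ z) σ := by
    intro σ hσ z
    simpa using (hE' σ hσ).clm_apply (hasDerivAt_const σ z)
  have hx : ∀ σ ∈ U, HasDerivAt (fun t => E t (u t)) (E' σ (u σ) + E σ (u' σ)) σ :=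
    fun σ hσ => (hE' σ hσ).clm_apply (hu' σ hσ)
  have hone : ∀ σ ∈ U, (⟪u σ, u σ⟫ : ℝ) = 1 := by
    intro σ hσ
    rw [real_inner_self_eq_norm_sq, hnorm σ hσ, one_pow]
  -- orthogonality of u and u'
  have huu' : ∀ σ ∈ U, (⟪u σ, u' σ⟫ : ℝ) = 0 := by
    intro σ hσ
    have h1 : HasDerivAt (fun t => (⟪u t, u t⟫ : ℝ)) (⟪u σ, u' σ⟫ + ⟪u' σ, u σ⟫) σ :=
      HasDerivAt.inner ℝ (hu' σ hσ) (hu' σ hσ)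
    have h2 : HasDerivAt (fun t => (⟪u t, u t⟫ : ℝ)) 0 σ := by
      refine (hasDerivAt_const σ (1:ℝ)).congr_of_eventuallyEq ?_
      exact Filter.eventuallyEq_of_mem (hU.mem_nhds hσ) (fun t ht => hone t ht)
    have h3 := h1.unique h2
    have h4 : (⟪u' σ, u σ⟫ : ℝ) = ⟪u σ, u' σ⟫ := real_inner_comm _ _
    linarith
  -- E' has values in VI
  have hE'VI : ∀ σ ∈ U, σ < α → ∀ z : WΓ, E' σ z ∈ VI := by
    intro σ hσ hσα z
    have hg : HasDerivAt (fun t => E t z - E σ z) (E' σ z) σ := by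
      simpa using (hEap σ hσ z).sub_const (E σ z)
    rw [hasDerivAt_iff_tendsto_slope] at hg
    refine hVI.mem_of_tendsto hg ?_
    have hmem : U ∩ Set.Iio α ∈ nhdsWithin σ {σ}ᶜ :=
      nhdsWithin_le_nhds (Filter.inter_mem (hU.mem_nhds hσ) (Iio_mem_nhds hσα))
    filter_upwards [hmem] with t ht
    have : slope (fun t => E t z - E σ z) σ t = (t - σ)⁻¹ • (E t z - E σ z) := by
      simp [slope_def_module]
    rw [this]
    exact VI.smul_mem _ (hdiffVI t σ ht.2 hσα z)
  -- derivative of the extension identity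
  have hextD : ∀ σ ∈ U, σ < α → ∀ z : WΓ, ∀ v ∈ VI,
      a (E' σ z) v - σ * ⟪E' σ z, v⟫ = ⟪E σ z, v⟫ := by
    intro σ hσ hσα z v hv
    have hEz := hEap σ hσ z
    have h1 : HasDerivAt (fun t => a (E t z) v) (a (E' σ z) v) σ := by
      simpa [Function.comp_def] using ((a.flip v).hasFDerivAt).comp_hasDerivAt σ hEz
    have hi : HasDerivAt (fun t => (⟪E t z, v⟫ : ℝ)) (⟪E' σ z, v⟫) σ := by
      simpa using HasDerivAt.inner ℝ hEz (hasDerivAt_const σ v)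
    have h2 : HasDerivAt (fun t => t * ⟪E t z, v⟫)
        (1 * ⟪E σ z, v⟫ + σ * ⟪E' σ z, v⟫) σ := (hasDerivAt_id σ).mul hi
    have h3 := h1.sub h2
    have h0 : HasDerivAt (fun t => a (E t z) v - t * ⟪E t z, v⟫) 0 σ := by
      refine (hasDerivAt_const σ (0:ℝ)).congr_of_eventuallyEq ?_
      exact Filter.eventuallyEq_of_mem (Iio_mem_nhds hσα) (fun t ht => hext t ht z v hv)
    have h4 := h3.unique h0
    linarith
  -- derivative of the eigenvalue identity
  have heigD : ∀ σ ∈ U, ∀ w : WΓ,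
      (a (E' σ (u σ)) (E σ w) - σ * ⟪E' σ (u σ), E σ w⟫)
      + (a (E σ (u' σ)) (E σ w) - σ * ⟪E σ (u' σ), E σ w⟫)
      + (a (E σ (u σ)) (E' σ w) - σ * ⟪E σ (u σ), E' σ w⟫)
      = ⟪E σ (u σ), E σ w⟫ + θ' σ * ⟪u σ, w⟫ + θ σ * ⟪u' σ, w⟫ := by
    intro σ hσ w
    have hxσ := hx σ hσ
    have hEw := hEap σ hσ w
    have hc : HasDerivAt (fun t => a (E t (u t))) (a (E' σ (u σ) + E σ (u' σ))) σ :=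
      (a.hasFDerivAt).comp_hasDerivAt σ hxσ
    have h1 : HasDerivAt (fun t => a (E t (u t)) (E t w))
        ((a (E' σ (u σ) + E σ (u' σ))) (E σ w) + (a (E σ (u σ))) (E' σ w)) σ :=
      HasDerivAt.clm_apply hc hEw
    have hinner1 : HasDerivAt (fun t => (⟪E t (u t), E t w⟫ : ℝ))
        (⟪E σ (u σ), E' σ w⟫ + ⟪E' σ (u σ) + E σ (u' σ), E σ w⟫) σ :=
      HasDerivAt.inner ℝ hxσ hEw
    have h2 : HasDerivAt (fun t => t * ⟪E t (u t), E t w⟫)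
        (1 * ⟪E σ (u σ), E σ w⟫ +
          σ * (⟪E σ (u σ), E' σ w⟫ + ⟪E' σ (u σ) + E σ (u' σ), E σ w⟫)) σ :=
      (hasDerivAt_id σ).mul hinner1
    have hiu : HasDerivAt (fun t => (⟪u t, w⟫ : ℝ)) (⟪u' σ, w⟫) σ := by
      simpa using HasDerivAt.inner ℝ (hu' σ hσ) (hasDerivAt_const σ w)
    have h3 : HasDerivAt (fun t => θ t * ⟪u t, w⟫)
        (θ' σ * ⟪u σ, w⟫ + θ σ * ⟪u' σ, w⟫) σ := (hθ' σ hσ).mul hiu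
    have hbig := (h1.sub h2).sub h3
    have h0 : HasDerivAt
        (fun t => a (E t (u t)) (E t w) - t * ⟪E t (u t), E t w⟫ - θ t * ⟪u t, w⟫) 0 σ := by
      refine (hasDerivAt_const σ (0:ℝ)).congr_of_eventuallyEq ?_
      refine Filter.eventuallyEq_of_mem (hU.mem_nhds hσ) (fun t ht => ?_)
      have h5 := heig t ht w
      show a (E t (u t)) (E t w) - t * ⟪E t (u t), E t w⟫ - θ t * ⟪u t, w⟫ = 0
      linarith
    have h4 := hbig.unique h0
    simp only [map_add, ContinuousLinearMap.add_apply, inner_add_left] at h4 ⊢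
    linarith
  -- value of θ'
  have hθ'eq : ∀ σ ∈ U, σ < α → θ' σ = -(⟪E σ (u σ), E σ (u σ)⟫ : ℝ) := by
    intro σ hσ hσα
    have h := heigD σ hσ (u σ)
    have hpVI := hE'VI σ hσ hσα (u σ)
    have t1 : a (E σ (u σ)) (E' σ (u σ)) - σ * ⟪E σ (u σ), E' σ (u σ)⟫ = 0 :=
      hext σ hσα (u σ) _ hpVI
    have t1' : a (E' σ (u σ)) (E σ (u σ)) - σ * ⟪E' σ (u σ), E σ (u σ)⟫ = 0 := by
      rw [hsymm, real_inner_comm]; exact t1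
    have t2 : a (E σ (u σ)) (E σ (u' σ)) - σ * ⟪E σ (u σ), E σ (u' σ)⟫ = 0 := by
      rw [heig σ hσ (u' σ), huu' σ hσ, mul_zero]
    have t2' : a (E σ (u' σ)) (E σ (u σ)) - σ * ⟪E σ (u' σ), E σ (u σ)⟫ = 0 := by
      rw [hsymm, real_inner_comm]; exact t2
    have h5 : (⟪u' σ, u σ⟫ : ℝ) = 0 := by rw [real_inner_comm]; exact huu' σ hσ
    rw [t1', t2', t1, hone σ hσ, h5] at h
    linarith
  -- identity for the B-term
  have hBid : ∀ σ ∈ U, σ < α →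
      a (E σ (u' σ)) (E σ (u' σ)) - σ * ⟪E σ (u' σ), E σ (u' σ)⟫
        = ⟪E σ (u σ), E σ (u' σ)⟫ + θ σ * ‖u' σ‖ ^ 2 := by
    intro σ hσ hσα
    have h := heigD σ hσ (u' σ)
    have t1 : a (E σ (u' σ)) (E' σ (u σ)) - σ * ⟪E σ (u' σ), E' σ (u σ)⟫ = 0 :=
      hext σ hσα (u' σ) _ (hE'VI σ hσ hσα (u σ))
    have t1' : a (E' σ (u σ)) (E σ (u' σ)) - σ * ⟪E' σ (u σ), E σ (u' σ)⟫ = 0 := by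
      rw [hsymm, real_inner_comm]; exact t1
    have t3 : a (E σ (u σ)) (E' σ (u' σ)) - σ * ⟪E σ (u σ), E' σ (u' σ)⟫ = 0 :=
      hext σ hσα (u σ) _ (hE'VI σ hσ hσα (u' σ))
    have h5 : (⟪u' σ, u' σ⟫ : ℝ) = ‖u' σ‖ ^ 2 := real_inner_self_eq_norm_sq _
    rw [t1', t3, huu' σ hσ, h5] at h
    linarith
  -- identity for the A-term
  have hAid : ∀ σ ∈ U, σ < α →
      a (E' σ (u σ)) (E' σ (u σ)) - σ * ⟪E' σ (u σ), E' σ (u σ)⟫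
        = ⟪E σ (u σ), E' σ (u σ)⟫ :=
    fun σ hσ hσα => hextD σ hσ hσα (u σ) _ (hE'VI σ hσ hσα (u σ))
  -- the key bounds on ⟪x, x'⟫
  have hAB : ∀ σ ∈ Set.Icc lam ρ₀,
      0 ≤ (⟪E σ (u σ), E' σ (u σ) + E σ (u' σ)⟫ : ℝ) ∧
      (⟪E σ (u σ), E' σ (u σ) + E σ (u' σ)⟫ : ℝ) ≤ C * ⟪E σ (u σ), E σ (u σ)⟫ := by
    intro σ hmem
    have hσU : σ ∈ U := hUIcc hmem
    have hσα : σ < α := lt_of_le_of_lt hmem.2 h₂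
    set X : ℝ := ‖E σ (u σ)‖ with hXdef
    have hX0 : 0 ≤ X := norm_nonneg _
    have hnx : (⟪E σ (u σ), E σ (u σ)⟫ : ℝ) = X ^ 2 := real_inner_self_eq_norm_sq _
    -- A term
    set A : ℝ := ⟪E σ (u σ), E' σ (u σ)⟫ with hAdef
    set np : ℝ := ‖E' σ (u σ)‖ with hnpdef
    have hnp0 : 0 ≤ np := norm_nonneg _
    have hpp : (⟪E' σ (u σ), E' σ (u σ)⟫ : ℝ) = np ^ 2 := real_inner_self_eq_norm_sq _
    have hAlow : (α - σ) * np ^ 2 ≤ A := by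
      have h1 := hcoer (E' σ (u σ)) (hE'VI σ hσU hσα (u σ))
      have h2 := hAid σ hσU hσα
      rw [hpp] at h2
      nlinarith
    have hA0 : 0 ≤ A := le_trans (by nlinarith) hAlow
    have hACS : A ≤ X * np := real_inner_le_norm _ _
    have hAub : (α - ρ₀) * A ≤ X ^ 2 := by
      rcases eq_or_lt_of_le hnp0 with h | h
      · have hA0' : A ≤ 0 := by rw [← h, mul_zero] at hACS; exact hACS
        nlinarith [sq_nonneg X, mul_nonpos_of_nonneg_of_nonpos hαρ₀.le hA0']
      · have h6 : (α - σ) * np ≤ X := by nlinarith [hAlow, hACS]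
        have h7 : (α - ρ₀) * np ≤ X := by
          have := mul_le_mul_of_nonneg_right (show α - ρ₀ ≤ α - σ by linarith [hmem.2]) hnp0
          linarith
        calc (α - ρ₀) * A ≤ (α - ρ₀) * (X * np) := mul_le_mul_of_nonneg_left hACS hαρ₀.le
          _ = X * ((α - ρ₀) * np) := by ring
          _ ≤ X * X := mul_le_mul_of_nonneg_left h7 hX0
          _ = X ^ 2 := by ring
    -- B term
    set B : ℝ := ⟪E σ (u σ), E σ (u' σ)⟫ with hBdef
    set nu : ℝ := ‖u' σ‖ with hnudef
    have hnu0 : 0 ≤ nu := norm_nonneg _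
    have hBeq := hBid σ hσU hσα
    have hB0 : 0 ≤ B := by
      have := hmin σ hσU (u' σ)
      linarith
    have hBlow : cg * nu ^ 2 ≤ B := by
      have hperp : (⟪u' σ, u σ⟫ : ℝ) = 0 := by rw [real_inner_comm]; exact huu' σ hσU
      have := hgap σ hmem (u' σ) hperp
      linarith
    have hBCS : B ≤ X * (cE * nu) := by
      have h1 : B ≤ X * ‖E σ (u' σ)‖ := real_inner_le_norm _ _
      have h2 : ‖E σ (u' σ)‖ ≤ ‖E σ‖ * nu := (E σ).le_opNorm _
      have h3 : ‖E σ‖ * nu ≤ cE * nu := mul_le_mul_of_nonneg_right (hcE σ hσα) hnu0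
      nlinarith
    have hBub : cg * B ≤ cE ^ 2 * X ^ 2 := by
      rcases eq_or_lt_of_le hnu0 with h | h
      · have hB0' : B ≤ 0 := by rw [← h, mul_zero, mul_zero] at hBCS; exact hBCS
        nlinarith [mul_nonpos_of_nonneg_of_nonpos hcg.le hB0', sq_nonneg (cE * X)]
      · have h6 : cg * nu ≤ cE * X := by nlinarith [hBlow, hBCS]
        calc cg * B ≤ cg * (X * (cE * nu)) := mul_le_mul_of_nonneg_left hBCS hcg.le
          _ = (cE * X) * (cg * nu) := by ring
          _ ≤ (cE * X) * (cE * X) := mul_le_mul_of_nonneg_left h6 (mul_nonneg hcE0 hX0)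
          _ = cE ^ 2 * X ^ 2 := by ring
    constructor
    · rw [inner_add_right]
      exact add_nonneg hA0 hB0
    · rw [inner_add_right, hnx, hCdef, add_mul]
      have hA' : A ≤ 1 / (α - ρ₀) * X ^ 2 := by
        rw [div_mul_eq_mul_div, one_mul, le_div_iff₀ hαρ₀]
        nlinarith [hAub]
      have hB' : B ≤ cE ^ 2 / cg * X ^ 2 := by
        rw [div_mul_eq_mul_div, le_div_iff₀ hcg]
        nlinarith [hBub]
      exact add_le_add hA' hB'
  -- derivative of n t = ⟪x t, x t⟫
  have hn : ∀ σ ∈ U, HasDerivAt (fun t => (⟪E t (u t), E t (u t)⟫ : ℝ))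
      (2 * ⟪E σ (u σ), E' σ (u σ) + E σ (u' σ)⟫) σ := by
    intro σ hσ
    have h := HasDerivAt.inner ℝ (hx σ hσ) (hx σ hσ)
    have h2 : (⟪E σ (u σ), E' σ (u σ) + E σ (u' σ)⟫ : ℝ)
        + ⟪E' σ (u σ) + E σ (u' σ), E σ (u σ)⟫
        = 2 * ⟪E σ (u σ), E' σ (u σ) + E σ (u' σ)⟫ := by
      rw [real_inner_comm (E' σ (u σ) + E σ (u' σ))]; ring
    rwa [h2] at h
  -- monotonicity of n on [lam, ρ₀]
  have hmono : MonotoneOn (fun t => (⟪E t (u t), E t (u t)⟫ : ℝ)) (Set.Icc lam ρ₀) := by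
    apply monotoneOn_of_deriv_nonneg (convex_Icc lam ρ₀)
    · exact fun t ht => (hn t (hUIcc ht)).continuousAt.continuousWithinAt
    · intro t ht
      rw [interior_Icc] at ht
      exact ((hn t (hUIcc (Set.Ioo_subset_Icc_self ht))).differentiableAt).differentiableWithinAt
    · intro t ht
      rw [interior_Icc] at ht
      have htI := Set.Ioo_subset_Icc_self ht
      rw [(hn t (hUIcc htI)).deriv]
      linarith [(hAB t htI).1]
  -- value of θ''
  have hθ''eq : ∀ σ ∈ U, σ < α →
      θ'' σ = -(2 * ⟪E σ (u σ), E' σ (u σ) + E σ (u' σ)⟫) := by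
    intro σ hσ hσα
    have hEq : θ' =ᶠ[nhds σ] (fun t => -(⟪E t (u t), E t (u t)⟫ : ℝ)) := by
      refine Filter.eventuallyEq_of_mem
        (Filter.inter_mem (hU.mem_nhds hσ) (Iio_mem_nhds hσα)) (fun t ht => ?_)
      exact hθ'eq t ht.1 ht.2
    have h1 : HasDerivAt θ' (-(2 * ⟪E σ (u σ), E' σ (u σ) + E σ (u' σ)⟫)) σ :=
      ((hn σ hσ).neg).congr_of_eventuallyEq hEq
    exact (hθ'' σ hσ).unique h1
  -- the lower bound K on θ''
  set nρ : ℝ := ⟪E ρ (u ρ), E ρ (u ρ)⟫ with hnρdef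
  set K : ℝ := -(2 * C * nρ) with hKdef
  have hIccsub : Set.Icc lam ρ ⊆ Set.Icc lam ρ₀ := Set.Icc_subset_Icc_right hρ₂
  have hθ''K : ∀ s ∈ Set.Icc lam ρ, K ≤ θ'' s := by
    intro s hs
    have hs' : s ∈ Set.Icc lam ρ₀ := hIccsub hs
    have hsU : s ∈ U := hUIcc hs'
    have hsα : s < α := lt_of_le_of_lt hs'.2 h₂
    rw [hθ''eq s hsU hsα]
    have h1 := (hAB s hs').2
    have h2 : (⟪E s (u s), E s (u s)⟫ : ℝ) ≤ nρ := hmono hs' hρIcc hs.2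
    nlinarith
  -- θ' - K t is monotone on [lam, ρ]
  have hgmono : MonotoneOn (fun t => θ' t - K * t) (Set.Icc lam ρ) := by
    apply monotoneOn_of_deriv_nonneg (convex_Icc lam ρ)
    · intro t ht
      exact ((hθ'' t (hUIcc (hIccsub ht))).sub
        ((hasDerivAt_id t).const_mul K)).continuousAt.continuousWithinAt
    · intro t ht
      rw [interior_Icc] at ht
      have htU : t ∈ U := hUIcc (hIccsub (Set.Ioo_subset_Icc_self ht))
      exact (((hθ'' t htU).sub ((hasDerivAt_id t).const_mul K)).differentiableAt).differentiableWithinAt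
    · intro t ht
      rw [interior_Icc] at ht
      have htI := Set.Ioo_subset_Icc_self ht
      have htU : t ∈ U := hUIcc (hIccsub htI)
      have hd : HasDerivAt (fun t => θ' t - K * t) (θ'' t - K * 1) t :=
        (hθ'' t htU).sub ((hasDerivAt_id t).const_mul K)
      rw [hd.deriv]
      have := hθ''K t htI
      linarith
  -- φ is antitone on [lam, ρ]
  have hφanti : AntitoneOn
      (fun t => θ t - θ' ρ * (t - ρ) - K / 2 * (t - ρ) ^ 2) (Set.Icc lam ρ) := by
    have hder : ∀ t ∈ U, HasDerivAt
        (fun t => θ t - θ' ρ * (t - ρ) - K / 2 * (t - ρ) ^ 2)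
        (θ' t - θ' ρ - K * (t - ρ)) t := by
      intro t htU
      have hd1 : HasDerivAt (fun t => θ' ρ * (t - ρ)) (θ' ρ * 1) t :=
        ((hasDerivAt_id t).sub_const ρ).const_mul (θ' ρ)
      have hd2 : HasDerivAt (fun t => K / 2 * (t - ρ) ^ 2)
          (K / 2 * (2 * (t - ρ) ^ 1 * 1)) t :=
        (((hasDerivAt_id t).sub_const ρ).pow 2).const_mul (K / 2)
      have h := ((hθ' t htU).sub hd1).sub hd2
      have heq : θ' t - θ' ρ * 1 - K / 2 * (2 * (t - ρ) ^ 1 * 1)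
          = θ' t - θ' ρ - K * (t - ρ) := by ring
      rwa [heq] at h
    apply antitoneOn_of_deriv_nonpos (convex_Icc lam ρ)
    · exact fun t ht => (hder t (hUIcc (hIccsub ht))).continuousAt.continuousWithinAt
    · intro t ht
      rw [interior_Icc] at ht
      exact ((hder t (hUIcc (hIccsub (Set.Ioo_subset_Icc_self ht)))).differentiableAt).differentiableWithinAt
    · intro t ht
      rw [interior_Icc] at ht
      have htI := Set.Ioo_subset_Icc_self ht
      rw [(hder t (hUIcc (hIccsub htI))).deriv]
      have hglam : (fun t => θ' t - K * t) t ≤ (fun t => θ' t - K * t) ρ :=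
        hgmono htI (Set.right_mem_Icc.2 hρ₁.le) ht.2.le
      simp only at hglam
      nlinarith
  -- Taylor-type inequality
  have hφle : θ ρ - θ' ρ * (ρ - ρ) - K / 2 * (ρ - ρ) ^ 2
      ≤ θ lam - θ' ρ * (lam - ρ) - K / 2 * (lam - ρ) ^ 2 :=
    hφanti (Set.left_mem_Icc.2 hρ₁.le) (Set.right_mem_Icc.2 hρ₁.le) hρ₁.le
  have hθ'ρ : θ' ρ = -nρ := hθ'eq ρ hρU (lt_of_le_of_lt hρ₂ h₂)
  have hnρpos : 0 < nρ := by
    rw [hnρdef, real_inner_self_eq_norm_sq]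
    exact pow_pos (norm_pos_iff.2 (hEu ρ hρU)) 2
  have hθ'neg : θ' ρ < 0 := by rw [hθ'ρ]; linarith
  have hfinal : θ ρ ≤ θ' ρ * (ρ - lam) - C * θ' ρ * (ρ - lam) ^ 2 := by
    have hKC : K = 2 * C * θ' ρ := by rw [hKdef, hθ'ρ]; ring
    rw [hθlam] at hφle
    nlinarith [hφle, hKC, sq_nonneg (ρ - lam)]
  -- conclude
  have hdiv : (ρ - lam) - C * (ρ - lam) ^ 2 ≤ θ ρ / θ' ρ := by
    rw [le_div_iff_of_neg hθ'neg]
    nlinarith [hfinal]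
  linarith
end

section
/- Let W_Γ and V be real Hilbert spaces, let s : ℝ → (bounded symmetric bilinear forms on W_Γ) be differentiable at ρ with derivative s', let θ : ℝ → ℝ and u : ℝ → W_Γ be differentiable at ρ with ‖u(σ)‖_Γ = 1 and the eigenvalue equation s_σ(u(σ), w) = θ(σ)·(u(σ), w)_Γ for all w ∈ W_Γ, for all σ in a neighborhood of ρ. Suppose s'(w₁, w₂) = −(E w₁, E w₂) for a bounded linear operator E : W_Γ → V with operator norm at most c_E, and there is g > 0 such that s_ρ(w,w) − θ(ρ)·‖w‖_Γ² ≥ g·‖w‖_Γ² for all w ∈ W_Γ with (w, u(ρ))_Γ = 0. Then ‖u'(ρ)‖_Γ ≤ (c_E/g)·‖E(u(ρ))‖, and consequently s_ρ(u'(ρ), u'(ρ)) − θ(ρ)·‖u'(ρ)‖_Γ² ≤ (c_E²/g)·‖E(u(ρ))‖². -/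
open scoped RealInnerProductSpace

/-- Bound on the derivative of the normalized eigenvector of a differentiable family of
bounded symmetric bilinear forms under a spectral gap: ‖u'(ρ)‖ ≤ (c_E/g)·‖E(u(ρ))‖ and
s_ρ(u'(ρ), u'(ρ)) − θ(ρ)·‖u'(ρ)‖² ≤ (c_E²/g)·‖E(u(ρ))‖². -/
theorem stmt12
    {V : Type*} [NormedAddCommGroup V] [InnerProductSpace ℝ V] [CompleteSpace V]
    {WΓ : Type*} [NormedAddCommGroup WΓ] [InnerProductSpace ℝ WΓ] [CompleteSpace WΓ]
    (s : ℝ → (WΓ →L[ℝ] WΓ →L[ℝ] ℝ))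
    (hsymm : ∀ σ (w₁ w₂ : WΓ), s σ w₁ w₂ = s σ w₂ w₁)
    (s' : WΓ →L[ℝ] WΓ →L[ℝ] ℝ)
    (ρ : ℝ) (hs : HasDerivAt s s' ρ)
    (θ : ℝ → ℝ) (u : ℝ → WΓ) (θ' : ℝ) (u' : WΓ)
    (hθ : HasDerivAt θ θ' ρ) (hu : HasDerivAt u u' ρ)
    (hnorm : ∀ᶠ σ in nhds ρ, ‖u σ‖ = 1)
    (heig : ∀ᶠ σ in nhds ρ, ∀ w : WΓ, s σ (u σ) w = θ σ * ⟪u σ, w⟫)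
    (E : WΓ →L[ℝ] V) (cE : ℝ) (hE : ‖E‖ ≤ cE)
    (hs' : ∀ w₁ w₂ : WΓ, s' w₁ w₂ = -⟪E w₁, E w₂⟫)
    (g : ℝ) (hg : 0 < g)
    (hgap : ∀ w : WΓ, ⟪w, u ρ⟫ = 0 → s ρ w w - θ ρ * ‖w‖ ^ 2 ≥ g * ‖w‖ ^ 2) :
    ‖u'‖ ≤ cE / g * ‖E (u ρ)‖ ∧
      s ρ u' u' - θ ρ * ‖u'‖ ^ 2 ≤ cE ^ 2 / g * ‖E (u ρ)‖ ^ 2 := by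

  -- orthogonality ⟪u ρ, u'⟫ = 0
  have horth : ⟪u ρ, u'⟫ = 0 := by
    have h1 : HasDerivAt (fun σ => ⟪u σ, u σ⟫) (⟪u ρ, u'⟫ + ⟪u', u ρ⟫) ρ :=
      hu.inner ℝ hu
    have h2 : (fun σ => ⟪u σ, u σ⟫) =ᶠ[nhds ρ] fun _ => (1 : ℝ) := by
      filter_upwards [hnorm] with σ hσ
      rw [real_inner_self_eq_norm_sq, hσ]; norm_num
    have h3 : HasDerivAt (fun _ : ℝ => (1 : ℝ)) (⟪u ρ, u'⟫ + ⟪u', u ρ⟫) ρ :=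
      h2.hasDerivAt_iff.mp h1
    have h4 := h3.unique (hasDerivAt_const ρ (1 : ℝ))
    have h5 : ⟪u', u ρ⟫ = ⟪u ρ, u'⟫ := real_inner_comm _ _
    linarith [h4, h5.symm ▸ h4]
  -- differentiated eigenvalue equation
  have hkey : ∀ w : WΓ, s' (u ρ) w + s ρ u' w = θ' * ⟪u ρ, w⟫ + θ ρ * ⟪u', w⟫ := by
    intro w
    have hF : HasDerivAt (fun σ => s σ (u σ)) (s' (u ρ) + s ρ u') ρ := hs.clm_apply hu
    have hFw : HasDerivAt (fun σ => s σ (u σ) w) (s' (u ρ) w + s ρ u' w) ρ := by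
      have := hF.clm_apply (hasDerivAt_const ρ w)
      simpa using this
    have hiw : HasDerivAt (fun σ => ⟪u σ, w⟫) (⟪u', w⟫) ρ := by
      have := hu.inner ℝ (hasDerivAt_const ρ w)
      simpa using this
    have hG : HasDerivAt (fun σ => θ σ * ⟪u σ, w⟫)
        (θ' * ⟪u ρ, w⟫ + θ ρ * ⟪u', w⟫) ρ := hθ.mul hiw
    have heq : (fun σ => s σ (u σ) w) =ᶠ[nhds ρ] fun σ => θ σ * ⟪u σ, w⟫ := by
      filter_upwards [heig] with σ hσ
      exact hσ w
    exact (heq.hasDerivAt_iff.mp hFw).unique hG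
  have hk := hkey u'
  rw [hs', horth] at hk
  -- s ρ u' u' - θ ρ ‖u'‖² = ⟪E (u ρ), E u'⟫
  have hA : s ρ u' u' - θ ρ * ‖u'‖ ^ 2 = ⟪E (u ρ), E u'⟫ := by
    have h : ⟪u', u'⟫ = ‖u'‖ ^ 2 := real_inner_self_eq_norm_sq u'
    rw [h] at hk
    linarith [hk]
  have hcE0 : 0 ≤ cE := le_trans (norm_nonneg E) hE
  have hEn : ‖E u'‖ ≤ cE * ‖u'‖ :=
    le_trans (E.le_opNorm u') (mul_le_mul_of_nonneg_right hE (norm_nonneg u'))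
  have hAle : s ρ u' u' - θ ρ * ‖u'‖ ^ 2 ≤ cE * ‖E (u ρ)‖ * ‖u'‖ := by
    rw [hA]
    calc ⟪E (u ρ), E u'⟫ ≤ ‖E (u ρ)‖ * ‖E u'‖ := real_inner_le_norm _ _
      _ ≤ ‖E (u ρ)‖ * (cE * ‖u'‖) :=
        mul_le_mul_of_nonneg_left hEn (norm_nonneg _)
      _ = cE * ‖E (u ρ)‖ * ‖u'‖ := by ring
  have hgap' : g * ‖u'‖ ^ 2 ≤ s ρ u' u' - θ ρ * ‖u'‖ ^ 2 :=
    hgap u' (by rw [real_inner_comm]; exact horth)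
  have h1 : ‖u'‖ ≤ cE / g * ‖E (u ρ)‖ := by
    rcases eq_or_lt_of_le (norm_nonneg u') with h0 | h0
    · rw [← h0]
      positivity
    · have : g * ‖u'‖ ≤ cE * ‖E (u ρ)‖ := by nlinarith
      rw [div_mul_eq_mul_div, le_div_iff₀ hg]
      linarith [this]
  refine ⟨h1, ?_⟩
  calc s ρ u' u' - θ ρ * ‖u'‖ ^ 2 ≤ cE * ‖E (u ρ)‖ * ‖u'‖ := hAle
    _ ≤ cE * ‖E (u ρ)‖ * (cE / g * ‖E (u ρ)‖) := by
        apply mul_le_mul_of_nonneg_left h1; positivity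
    _ = cE ^ 2 / g * ‖E (u ρ)‖ ^ 2 := by ring
end
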